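/- arXiv:2305.02861 — 3 statements merged into one kernel-verified Lean document; each statement's English description precedes it below -/
import Mathlib

section
/- Let 0 < s < 1. There exists a constant c_s > 0, depending only on s, such that for all t > 0, m ∈ ℝ³ and η ∈ ℝ³, c_s · t·(|η|² + t²|m|²)^s ≤ ∫₀ᵗ |η + ρ m|^{2s} dρ ≤ (1/c_s) · t·(|η|² + t²|m|²)^s. -/
open intervalIntegral MeasureTheory

lemma aux_interval_bound (t ρ₀ : ℝ) (ht : 0 < t) :
    ∃ a : ℝ, 0 ≤ a ∧ a + t/4 ≤ t ∧
      ∀ ρ, a ≤ ρ → ρ ≤ a + t/4 → ρ₀^2 + t^2 ≤ 80 * (ρ - ρ₀)^2 := by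
  rcases le_or_gt ρ₀ (t/2) with h | h
  · refine ⟨3*t/4, by linarith, by linarith, fun ρ h1 h2 => ?_⟩
    nlinarith [sq_nonneg (ρ - ρ₀ - t/4), sq_nonneg ρ₀, sq_nonneg (4*(ρ-ρ₀) - t),
      sq_nonneg (ρ - ρ₀), mul_pos ht ht]
  · refine ⟨0, le_refl _, by linarith, fun ρ h1 h2 => ?_⟩
    nlinarith [sq_nonneg (ρ₀ - ρ - t/4), sq_nonneg (2*(ρ₀-ρ) - ρ₀), sq_nonneg (ρ₀ - ρ)]

lemma pyth_aux {E : Type*} [NormedAddCommGroup E] [InnerProductSpace ℝ E]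
    (η m : E) (ρ₀ : ℝ) (hρ₀ : ρ₀ * ‖m‖^2 = -(inner ℝ η m : ℝ)) (ρ : ℝ) :
    ‖η + ρ • m‖^2 = ‖η + ρ₀ • m‖^2 + (ρ - ρ₀)^2 * ‖m‖^2 := by
  have hdecomp : η + ρ • m = (η + ρ₀ • m) + (ρ - ρ₀) • m := by
    rw [sub_smul]; abel
  rw [hdecomp, norm_add_sq_real]
  have horth : (inner ℝ (η + ρ₀ • m) ((ρ - ρ₀) • m) : ℝ) = 0 := by
    rw [inner_add_left, real_inner_smul_right, real_inner_smul_right,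
      real_inner_smul_left, real_inner_self_eq_norm_sq]
    have : (inner ℝ η m : ℝ) = -(ρ₀ * ‖m‖^2) := by linarith [hρ₀]
    rw [this]; ring
  rw [horth, norm_smul, mul_pow, Real.norm_eq_abs, sq_abs]
  ring

theorem integral_rpow_two_sided_bound (s : ℝ) (hs : 0 < s) (hs1 : s < 1) :
    ∃ c : ℝ, 0 < c ∧
      ∀ t : ℝ, 0 < t → ∀ m η : EuclideanSpace ℝ (Fin 3),
        (c * (t * (‖η‖ ^ 2 + t ^ 2 * ‖m‖ ^ 2) ^ s)
            ≤ ∫ ρ in (0:ℝ)..t, ‖η + ρ • m‖ ^ (2 * s)) ∧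
        (∫ ρ in (0:ℝ)..t, ‖η + ρ • m‖ ^ (2 * s))
            ≤ (1 / c) * (t * (‖η‖ ^ 2 + t ^ 2 * ‖m‖ ^ 2) ^ s) := by
  have h80 : (1:ℝ) ≤ (80:ℝ) ^ s := Real.one_le_rpow (by norm_num) hs.le
  refine ⟨1 / (4 * (80:ℝ) ^ s), by positivity, fun t ht m η => ?_⟩
  set X : ℝ := ‖η‖ ^ 2 + t ^ 2 * ‖m‖ ^ 2 with hXdef
  have hX0 : 0 ≤ X := by positivity
  have hrw : ∀ x : ℝ, 0 ≤ x → x ^ (2*s) = (x^2) ^ s := by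
    intro x hx
    rw [Real.rpow_mul hx]
    norm_num [Real.rpow_natCast]
  have hcont : Continuous fun ρ : ℝ => ‖η + ρ • m‖ ^ (2*s) := by
    apply Continuous.rpow_const (by continuity)
    intro x; exact Or.inr (by positivity)
  have hint : ∀ a b : ℝ, IntervalIntegrable (fun ρ : ℝ => ‖η + ρ • m‖ ^ (2*s)) volume a b :=
    fun a b => hcont.intervalIntegrable a b
  constructor
  · -- lower bound
    rcases eq_or_ne m 0 with hm | hm
    · subst hm
      simp only [smul_zero, add_zero, norm_zero, intervalIntegral.integral_const,
        smul_eq_mul, sub_zero]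
      have : X = ‖η‖^2 := by simp [hXdef]
      rw [this, ← hrw _ (norm_nonneg η)]
      have hp : (0:ℝ) ≤ ‖η‖ ^ (2*s) := Real.rpow_nonneg (norm_nonneg _) _
      rw [div_mul_eq_mul_div, one_mul, div_le_iff₀ (by positivity)]
      nlinarith [mul_nonneg ht.le hp]
    · have hmn : (0:ℝ) < ‖m‖^2 := pow_pos (norm_pos_iff.mpr hm) 2
      set ρ₀ : ℝ := -(inner ℝ η m : ℝ) / ‖m‖^2 with hρ₀def
      have hρ₀ : ρ₀ * ‖m‖^2 = -(inner ℝ η m : ℝ) := by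
        rw [hρ₀def, div_mul_cancel₀ _ hmn.ne']
      obtain ⟨a, ha0, hat, hab⟩ := aux_interval_bound t ρ₀ ht
      have hXeq : ‖η‖^2 = ‖η + ρ₀ • m‖^2 + ρ₀^2 * ‖m‖^2 := by
        have := pyth_aux η m ρ₀ hρ₀ 0
        simpa using this
      have hpt : ∀ ρ ∈ Set.Icc a (a + t/4),
          X / 80 ≤ ‖η + ρ • m‖^2 := by
        intro ρ hρ
        have h1 := pyth_aux η m ρ₀ hρ₀ ρ
        have h2 := hab ρ hρ.1 hρ.2
        have hD : 0 ≤ ‖η + ρ₀ • m‖^2 := by positivity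
        rw [hXdef, hXeq, h1]
        nlinarith [hmn.le]
      have hmono : ∀ ρ ∈ Set.Icc a (a + t/4),
          (X/80) ^ s ≤ ‖η + ρ • m‖ ^ (2*s) := by
        intro ρ hρ
        rw [hrw _ (norm_nonneg _)]
        exact Real.rpow_le_rpow (by positivity) (hpt ρ hρ) hs.le
      have hstep1 : (t/4) * (X/80)^s ≤ ∫ ρ in a..(a + t/4), ‖η + ρ • m‖ ^ (2*s) := by
        have := intervalIntegral.integral_mono_on (f := fun _ : ℝ => (X/80)^s)
          (g := fun ρ : ℝ => ‖η + ρ • m‖ ^ (2*s)) (by linarith : a ≤ a + t/4)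
          (intervalIntegrable_const) (hint a (a + t/4)) hmono
        simpa using this
      have hstep2 : (∫ ρ in a..(a + t/4), ‖η + ρ • m‖ ^ (2*s))
          ≤ ∫ ρ in (0:ℝ)..t, ‖η + ρ • m‖ ^ (2*s) := by
        apply intervalIntegral.integral_mono_interval ha0 (by linarith : a ≤ a + t/4) hat
        · exact Filter.Eventually.of_forall fun x => Real.rpow_nonneg (norm_nonneg _) _
        · exact hint 0 t
      have hdiv : (X/80)^s = X^s / (80:ℝ)^s := Real.div_rpow hX0 (by norm_num) s
      have h80' : (0:ℝ) < (80:ℝ)^s := by positivity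
      calc 1 / (4 * (80:ℝ) ^ s) * (t * X ^ s)
          = (t/4) * (X^s / (80:ℝ)^s) := by field_simp <;> ring
        _ = (t/4) * (X/80)^s := by rw [hdiv]
        _ ≤ ∫ ρ in a..(a + t/4), ‖η + ρ • m‖ ^ (2*s) := hstep1
        _ ≤ ∫ ρ in (0:ℝ)..t, ‖η + ρ • m‖ ^ (2*s) := hstep2
  · -- upper bound
    have hpt : ∀ ρ ∈ Set.Icc (0:ℝ) t, ‖η + ρ • m‖ ^ (2*s) ≤ (2:ℝ)^s * X^s := by
      intro ρ hρ
      have hb : ‖η + ρ • m‖^2 ≤ 2 * X := by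
        have h1 : ‖η + ρ • m‖ ≤ ‖η‖ + ρ * ‖m‖ := by
          calc ‖η + ρ • m‖ ≤ ‖η‖ + ‖ρ • m‖ := norm_add_le _ _
            _ = ‖η‖ + |ρ| * ‖m‖ := by rw [norm_smul]; simp
            _ = ‖η‖ + ρ * ‖m‖ := by rw [abs_of_nonneg hρ.1]
        nlinarith [norm_nonneg (η + ρ • m), norm_nonneg η, norm_nonneg m,
          sq_nonneg (‖η‖ - t * ‖m‖), hρ.1, hρ.2, mul_nonneg hρ.1 (norm_nonneg m),
          mul_le_mul_of_nonneg_right hρ.2 (norm_nonneg m)]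
      rw [hrw _ (norm_nonneg _), ← Real.mul_rpow (by norm_num) hX0]
      exact Real.rpow_le_rpow (by positivity) hb hs.le
    have := intervalIntegral.integral_mono_on (f := fun ρ : ℝ => ‖η + ρ • m‖ ^ (2*s))
      (g := fun _ : ℝ => (2:ℝ)^s * X^s) ht.le (hint 0 t) intervalIntegrable_const hpt
    simp only [intervalIntegral.integral_const, smul_eq_mul, sub_zero] at this
    have h2le : (2:ℝ)^s ≤ (80:ℝ)^s := Real.rpow_le_rpow (by norm_num) (by norm_num) hs.le
    have hXs : (0:ℝ) ≤ X^s := Real.rpow_nonneg hX0 _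
    have h80' : (0:ℝ) < (80:ℝ)^s := by positivity
    rw [one_div_one_div]
    calc (∫ ρ in (0:ℝ)..t, ‖η + ρ • m‖ ^ (2*s)) ≤ t * ((2:ℝ)^s * X^s) := this
      _ ≤ 4 * (80:ℝ)^s * (t * X^s) := by nlinarith [mul_nonneg ht.le hXs]
end

section
/- Let 0 < s < 1 and t > 0. There exists a constant c_{s,t} > 0, depending only on s and t, such that for all m, η ∈ ℝ³, c_{s,t}·(|m|² + |η|²)^s ≤ ∫₀ᵗ |η + ρ m|^{2s} dρ ≤ (1/c_{s,t})·(|m|² + |η|²)^s. -/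
open MeasureTheory intervalIntegral

set_option maxHeartbeats 1000000 in

theorem integral_rpow_two_sided_bound_fixed_time (s : ℝ) (hs : 0 < s) (hs1 : s < 1)
    (t : ℝ) (ht : 0 < t) :
    ∃ c : ℝ, 0 < c ∧
      ∀ m η : EuclideanSpace ℝ (Fin 3),
        (c * (‖m‖ ^ 2 + ‖η‖ ^ 2) ^ s
            ≤ ∫ ρ in (0:ℝ)..t, ‖η + ρ • m‖ ^ (2 * s)) ∧
        (∫ ρ in (0:ℝ)..t, ‖η + ρ • m‖ ^ (2 * s))
            ≤ (1 / c) * (‖m‖ ^ 2 + ‖η‖ ^ 2) ^ s := by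
  have hsq : ∀ x : ℝ, 0 ≤ x → x ^ (2*s) = (x^2)^s := by
    intro x hx
    rw [Real.rpow_mul hx]
    norm_num
  set r : ℝ := t^2 / (4*t^2 + 16) with hr
  have hrpos : 0 < r := by positivity
  set c₁ : ℝ := (t/4) * r ^ s with hc1
  have hc1pos : 0 < c₁ := by positivity
  set K : ℝ := (2*(1+t^2)) ^ s with hK
  have hKpos : 0 < K := by positivity
  refine ⟨min c₁ (1/(t*K)), lt_min hc1pos (by positivity), fun m η => ?_⟩
  set a := ‖η‖ with ha
  set b := ‖m‖ with hb
  have ha0 : 0 ≤ a := norm_nonneg _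
  have hb0 : 0 ≤ b := norm_nonneg _
  set X : ℝ := b^2 + a^2 with hX
  have hX0 : 0 ≤ X := by positivity
  set f : ℝ → ℝ := fun ρ => ‖η + ρ • m‖ ^ (2*s) with hf
  have hfc : Continuous f := by
    apply Continuous.rpow_const
    · exact (continuous_const.add (continuous_id.smul continuous_const)).norm
    · intro x; right; positivity
  have hfint : ∀ u v : ℝ, IntervalIntegrable f volume u v := fun u v =>
    hfc.intervalIntegrable u v
  have hfnn : ∀ ρ, 0 ≤ f ρ := fun ρ => Real.rpow_nonneg (norm_nonneg _) _
  -- lower bounds on the norm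
  have hlow1 : ∀ ρ : ℝ, 0 ≤ ρ → a - ρ * b ≤ ‖η + ρ • m‖ := by
    intro ρ hρ
    have h := norm_sub_norm_le η (-(ρ • m))
    rw [sub_neg_eq_add, norm_neg, norm_smul, Real.norm_eq_abs, abs_of_nonneg hρ] at h
    exact h
  have hlow2 : ∀ ρ : ℝ, 0 ≤ ρ → ρ * b - a ≤ ‖η + ρ • m‖ := by
    intro ρ hρ
    have h := norm_sub_norm_le (ρ • m) (-η)
    rw [sub_neg_eq_add, norm_neg, add_comm, norm_smul, Real.norm_eq_abs,
      abs_of_nonneg hρ] at h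
    exact h
  have hup : ∀ ρ : ℝ, 0 ≤ ρ → ‖η + ρ • m‖ ≤ a + ρ * b := by
    intro ρ hρ
    have h := norm_add_le η (ρ • m)
    rwa [norm_smul, Real.norm_eq_abs, abs_of_nonneg hρ] at h
  constructor
  · -- LOWER BOUND
    obtain ⟨u, hu0, hut, hpt⟩ :
        ∃ u, 0 ≤ u ∧ u + t/4 ≤ t ∧
          ∀ ρ ∈ Set.Icc u (u + t/4), r * X ≤ ‖η + ρ • m‖^2 := by
      rcases le_or_gt (t * b) (2 * a) with hcase | hcase
      · refine ⟨0, le_refl 0, by linarith, fun ρ hρ => ?_⟩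
        obtain ⟨h1, h2⟩ := hρ
        rw [zero_add] at h2
        have h1' : (0:ℝ) ≤ ρ := by linarith [h1]
        have hrb : ρ * b ≤ a / 2 := by
          have : ρ * b ≤ (t/4) * b := mul_le_mul_of_nonneg_right h2 hb0
          nlinarith
        have hN : a / 2 ≤ ‖η + ρ • m‖ := by
          have := hlow1 ρ h1'
          linarith
        have hrX : r * X ≤ a^2 / 4 := by
          rw [hr, hX, div_mul_eq_mul_div, div_le_div_iff₀ (by positivity) (by norm_num)]
          have htb : 0 ≤ t * b := by positivity
          nlinarith [mul_self_le_mul_self htb hcase]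
        have hNsq : (a/2)^2 ≤ ‖η + ρ • m‖^2 := pow_le_pow_left₀ (by linarith) hN 2
        nlinarith [hrX, hNsq]
      · refine ⟨3*t/4, by positivity, by linarith, fun ρ hρ => ?_⟩
        obtain ⟨h1, h2⟩ := hρ
        have h1' : (0:ℝ) ≤ ρ := by linarith
        have hrb : t * b / 4 ≤ ρ * b - a := by
          have : (3*t/4) * b ≤ ρ * b := mul_le_mul_of_nonneg_right h1 hb0
          nlinarith
        have hN : t * b / 4 ≤ ‖η + ρ • m‖ := by
          have := hlow2 ρ h1'
          linarith
        have hrX : r * X ≤ (t*b)^2 / 16 := by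
          rw [hr, hX, div_mul_eq_mul_div, div_le_div_iff₀ (by positivity) (by norm_num)]
          have h2a : 0 ≤ 2 * a := by positivity
          have h4 : 4*a^2 ≤ t^2*b^2 := by nlinarith [mul_self_le_mul_self h2a hcase.le]
          nlinarith [mul_le_mul_of_nonneg_left h4 (by positivity : (0:ℝ) ≤ 4*t^2)]
        have hNsq : (t*b/4)^2 ≤ ‖η + ρ • m‖^2 := pow_le_pow_left₀ (by positivity) hN 2
        nlinarith [hrX, hNsq]
    have hmid : (t/4) * (r^s * X^s) ≤ ∫ ρ in u..(u+t/4), f ρ := by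
      have hcst : ∀ ρ ∈ Set.Icc u (u+t/4), r^s * X^s ≤ f ρ := by
        intro ρ hρ
        show r^s * X^s ≤ ‖η + ρ • m‖ ^ (2*s)
        rw [hsq _ (norm_nonneg _), ← Real.mul_rpow hrpos.le hX0]
        exact Real.rpow_le_rpow (by positivity) (hpt ρ hρ) hs.le
      have := intervalIntegral.integral_mono_on (by linarith : u ≤ u + t/4)
        (intervalIntegrable_const) (hfint u (u+t/4)) hcst
      rwa [intervalIntegral.integral_const, add_sub_cancel_left, smul_eq_mul] at this
    have hadd1 := integral_add_adjacent_intervals (hfint 0 u) (hfint u (u+t/4))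
    have hadd2 := integral_add_adjacent_intervals (hfint 0 (u+t/4)) (hfint (u+t/4) t)
    have hnn1 : 0 ≤ ∫ ρ in (0:ℝ)..u, f ρ :=
      intervalIntegral.integral_nonneg hu0 (fun x _ => hfnn x)
    have hnn2 : 0 ≤ ∫ ρ in (u+t/4)..t, f ρ :=
      intervalIntegral.integral_nonneg hut (fun x _ => hfnn x)
    have hfinal : (t/4) * (r^s * X^s) ≤ ∫ ρ in (0:ℝ)..t, f ρ := by linarith
    calc min c₁ (1/(t*K)) * X^s ≤ c₁ * X^s :=
          mul_le_mul_of_nonneg_right (min_le_left _ _) (Real.rpow_nonneg hX0 s)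
      _ = (t/4) * (r^s * X^s) := by rw [hc1]; ring
      _ ≤ _ := hfinal
  · -- UPPER BOUND
    have hcst : ∀ ρ ∈ Set.Icc (0:ℝ) t, f ρ ≤ K * X^s := by
      intro ρ hρ
      obtain ⟨h1, h2⟩ := hρ
      have hub := hup ρ h1
      have hsq2 : ‖η + ρ • m‖^2 ≤ 2*(1+t^2) * X := by
        have hNN : ‖η + ρ • m‖^2 ≤ (a + ρ*b)^2 := pow_le_pow_left₀ (norm_nonneg _) hub 2
        have hρ2 : ρ^2 ≤ t^2 := pow_le_pow_left₀ h1 h2 2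
        rw [hX]
        nlinarith [sq_nonneg (a - ρ*b), mul_le_mul_of_nonneg_right hρ2 (sq_nonneg b)]
      show ‖η + ρ • m‖ ^ (2*s) ≤ K * X^s
      rw [hsq _ (norm_nonneg _), hK, ← Real.mul_rpow (by positivity) hX0]
      exact Real.rpow_le_rpow (sq_nonneg _) hsq2 hs.le
    have hint := intervalIntegral.integral_mono_on ht.le (hfint 0 t)
      (intervalIntegrable_const) hcst
    rw [intervalIntegral.integral_const, sub_zero, smul_eq_mul] at hint
    have hmin : min c₁ (1/(t*K)) ≤ 1/(t*K) := min_le_right _ _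
    have hminpos : 0 < min c₁ (1/(t*K)) := lt_min hc1pos (by positivity)
    have h1c : t * K ≤ 1 / min c₁ (1/(t*K)) := by
      rw [le_div_iff₀ hminpos]
      calc t * K * min c₁ (1/(t*K)) ≤ t * K * (1/(t*K)) :=
            mul_le_mul_of_nonneg_left hmin (by positivity)
        _ = 1 := by field_simp
    calc (∫ ρ in (0:ℝ)..t, f ρ) ≤ t * (K * X^s) := hint
      _ = (t * K) * X^s := by ring
      _ ≤ (1 / min c₁ (1/(t*K))) * X^s :=
          mul_le_mul_of_nonneg_right h1c (Real.rpow_nonneg hX0 s)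
end

section
/- Let 0 < s < 1 and let g₀ ∈ L²(𝕋³ × ℝ³). Define g(t) by (F_{x,v}g)(t,m,η) = exp(−∫₀ᵗ |η+ρm|^{2s} dρ)·(F_{x,v}g₀)(m, η+tm). Then for every t > 0 there exists a constant c_{s,t} > 0 such that ‖exp(c_{s,t}(−Δ_x − Δ_v)^s) g(t)‖_{L²(𝕋³×ℝ³)} ≤ ‖g₀‖_{L²(𝕋³×ℝ³)}; in particular g(t) belongs to the Gevrey class G^{1/(2s)}(𝕋³_x × ℝ³_v) for all t > 0. -/
open MeasureTheory


lemma lower_bound_sub {E : Type*} [NormedAddCommGroup E] [NormedSpace ℝ E]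
    (s t u v C : ℝ) (hs : 0 < s) (h0u : 0 ≤ u) (huv : u ≤ v) (hvt : v ≤ t)
    (w η : E)
    (hb : ∀ ρ ∈ Set.Icc u v, C ≤ ‖η + ρ • w‖ ^ (2 * s)) :
    (v - u) * C ≤ ∫ ρ in (0:ℝ)..t, ‖η + ρ • w‖ ^ (2 * s) := by
  have hcont : Continuous fun ρ : ℝ => ‖η + ρ • w‖ ^ (2 * s) := by
    apply Continuous.rpow_const
    · exact (continuous_const.add (continuous_id.smul continuous_const)).norm
    · intro x; right; positivity
  have hint : ∀ a b : ℝ, IntervalIntegrable (fun ρ : ℝ => ‖η + ρ • w‖ ^ (2 * s)) volume a b :=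
    fun a b => hcont.intervalIntegrable a b
  have hnn : ∀ ρ : ℝ, 0 ≤ ‖η + ρ • w‖ ^ (2 * s) := fun ρ => by positivity
  have h1 : (∫ ρ in (0:ℝ)..t, ‖η + ρ • w‖ ^ (2 * s))
      = (∫ ρ in (0:ℝ)..u, ‖η + ρ • w‖ ^ (2 * s))
        + (∫ ρ in u..v, ‖η + ρ • w‖ ^ (2 * s))
        + (∫ ρ in v..t, ‖η + ρ • w‖ ^ (2 * s)) := by
    rw [intervalIntegral.integral_add_adjacent_intervals (hint 0 u) (hint u v),
      intervalIntegral.integral_add_adjacent_intervals ((hint 0 u).trans (hint u v)) (hint v t)]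
  have h2 : (0:ℝ) ≤ ∫ ρ in (0:ℝ)..u, ‖η + ρ • w‖ ^ (2 * s) :=
    intervalIntegral.integral_nonneg h0u (fun ρ _ => hnn ρ)
  have h3 : (0:ℝ) ≤ ∫ ρ in v..t, ‖η + ρ • w‖ ^ (2 * s) :=
    intervalIntegral.integral_nonneg hvt (fun ρ _ => hnn ρ)
  have h4 : (v - u) * C ≤ ∫ ρ in u..v, ‖η + ρ • w‖ ^ (2 * s) := by
    have := intervalIntegral.integral_mono_on (f := fun _ : ℝ => C)
      (g := fun ρ : ℝ => ‖η + ρ • w‖ ^ (2 * s)) (μ := volume) huv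
      (intervalIntegrable_const) (hint u v) hb
    simpa [intervalIntegral.integral_const, smul_eq_mul] using this
  linarith

lemma sq_rpow' (a s : ℝ) (ha : 0 ≤ a) : (a ^ 2) ^ s = a ^ (2 * s) := by
  rw [← Real.rpow_natCast a 2, ← Real.rpow_mul ha]
  norm_num

lemma key_lemma (s t : ℝ) (hs : 0 < s) (ht : 0 < t) :
    ∃ c : ℝ, 0 < c ∧ ∀ w η : EuclideanSpace ℝ (Fin 3),
      c * (‖w‖ ^ 2 + ‖η‖ ^ 2) ^ s ≤ ∫ ρ in (0:ℝ)..t, ‖η + ρ • w‖ ^ (2 * s) := by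
  have hc1 : (0:ℝ) < (t/4) / ((1 + 4/t^2) ^ s * 2 ^ (2*s)) := by positivity
  have hc2 : (0:ℝ) < (t/4) * (t/4) ^ (2*s) / (t^2/4 + 1) ^ s := by positivity
  refine ⟨min ((t/4) / ((1 + 4/t^2) ^ s * 2 ^ (2*s)))
            ((t/4) * (t/4) ^ (2*s) / (t^2/4 + 1) ^ s), lt_min hc1 hc2, fun w η => ?_⟩
  set a := ‖η‖ with ha_def
  set b := ‖w‖ with hb_def
  have ha : 0 ≤ a := norm_nonneg _
  have hb0 : 0 ≤ b := norm_nonneg _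
  have hlow1 : ∀ ρ : ℝ, 0 ≤ ρ → a - ρ * b ≤ ‖η + ρ • w‖ := by
    intro ρ hρ
    have h := norm_sub_norm_le η (-(ρ • w))
    rw [sub_neg_eq_add, norm_neg, norm_smul, Real.norm_eq_abs, abs_of_nonneg hρ] at h
    exact h
  have hlow2 : ∀ ρ : ℝ, 0 ≤ ρ → ρ * b - a ≤ ‖η + ρ • w‖ := by
    intro ρ hρ
    have h := norm_sub_norm_le (ρ • w) (-η)
    rw [sub_neg_eq_add, norm_neg, norm_smul, Real.norm_eq_abs, abs_of_nonneg hρ,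
      add_comm] at h
    exact h
  rcases le_or_gt (t*b/2) a with h1 | h1
  · -- case a large
    have hbd : ∀ ρ ∈ Set.Icc (0:ℝ) (t/4), (a/2) ^ (2*s) ≤ ‖η + ρ • w‖ ^ (2*s) := by
      intro ρ hρ
      apply Real.rpow_le_rpow (by positivity) _ (by positivity)
      have h2 : ρ * b ≤ (t/4) * b := mul_le_mul_of_nonneg_right hρ.2 hb0
      have h3 : a/2 ≤ a - ρ * b := by nlinarith
      exact le_trans h3 (hlow1 ρ hρ.1)
    have hI := lower_bound_sub s t 0 (t/4) ((a/2) ^ (2*s)) hs le_rfl (by linarith)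
      (by linarith) w η hbd
    refine le_trans ?_ hI
    have hA : (b^2 + a^2) ^ s ≤ (1 + 4/t^2) ^ s * a ^ (2*s) := by
      have hba : b^2 + a^2 ≤ (1 + 4/t^2) * a^2 := by
        have h2 : t * b ≤ 2 * a := by linarith
        have h3 : b^2 ≤ 4*a^2/t^2 := by
          rw [le_div_iff₀ (by positivity)]
          nlinarith [mul_nonneg ht.le hb0]
        have heq : (1 + 4/t^2) * a^2 = a^2 + 4*a^2/t^2 := by ring
        linarith
      calc (b^2 + a^2) ^ s ≤ ((1 + 4/t^2) * a^2) ^ s :=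
              Real.rpow_le_rpow (by positivity) hba hs.le
        _ = (1 + 4/t^2) ^ s * (a^2) ^ s := Real.mul_rpow (by positivity) (sq_nonneg a)
        _ = (1 + 4/t^2) ^ s * a ^ (2*s) := by rw [sq_rpow' a s ha]
    have hKpos : (0:ℝ) < (1 + 4/t^2) ^ s := by positivity
    have h2pos : (0:ℝ) < (2:ℝ) ^ (2*s) := by positivity
    have hmul : min ((t/4) / ((1 + 4/t^2) ^ s * 2 ^ (2*s)))
          ((t/4) * (t/4) ^ (2*s) / (t^2/4 + 1) ^ s) * (b^2 + a^2) ^ s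
        ≤ ((t/4) / ((1 + 4/t^2) ^ s * 2 ^ (2*s))) * ((1 + 4/t^2) ^ s * a ^ (2*s)) :=
      mul_le_mul (min_le_left _ _) hA (by positivity) hc1.le
    refine le_trans hmul ?_
    apply le_of_eq
    rw [Real.div_rpow ha (by norm_num : (0:ℝ) ≤ 2)]
    field_simp
    ring
  · -- case b large
    have hbd : ∀ ρ ∈ Set.Icc (3*t/4) t, (t*b/4) ^ (2*s) ≤ ‖η + ρ • w‖ ^ (2*s) := by
      intro ρ hρ
      apply Real.rpow_le_rpow (by positivity) _ (by positivity)
      have h2 : (3*t/4) * b ≤ ρ * b := mul_le_mul_of_nonneg_right hρ.1 hb0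
      have h3 : t*b/4 ≤ ρ * b - a := by nlinarith
      exact le_trans h3 (hlow2 ρ (by linarith [hρ.1]))
    have hI := lower_bound_sub s t (3*t/4) t ((t*b/4) ^ (2*s)) hs (by linarith)
      (by linarith) le_rfl w η hbd
    refine le_trans ?_ hI
    have hA : (b^2 + a^2) ^ s ≤ (t^2/4 + 1) ^ s * b ^ (2*s) := by
      have hba : b^2 + a^2 ≤ (t^2/4 + 1) * b^2 := by nlinarith
      calc (b^2 + a^2) ^ s ≤ ((t^2/4 + 1) * b^2) ^ s :=
              Real.rpow_le_rpow (by positivity) hba hs.le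
        _ = (t^2/4 + 1) ^ s * (b^2) ^ s := Real.mul_rpow (by positivity) (sq_nonneg b)
        _ = (t^2/4 + 1) ^ s * b ^ (2*s) := by rw [sq_rpow' b s hb0]
    have hKpos : (0:ℝ) < (t^2/4 + 1) ^ s := by positivity
    have hmul : min ((t/4) / ((1 + 4/t^2) ^ s * 2 ^ (2*s)))
          ((t/4) * (t/4) ^ (2*s) / (t^2/4 + 1) ^ s) * (b^2 + a^2) ^ s
        ≤ ((t/4) * (t/4) ^ (2*s) / (t^2/4 + 1) ^ s) * ((t^2/4 + 1) ^ s * b ^ (2*s)) :=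
      mul_le_mul (min_le_right _ _) hA (by positivity) hc2.le
    refine le_trans hmul ?_
    apply le_of_eq
    rw [show (t*b/4 : ℝ) = (t/4) * b by ring,
      Real.mul_rpow (by positivity) hb0]
    field_simp
    ring

/-- Embed an integer frequency `m ∈ ℤ³` into `ℝ³`. -/
noncomputable def intoE (m : Fin 3 → ℤ) : EuclideanSpace ℝ (Fin 3) :=
  WithLp.toLp 2 (fun i => (m i : ℝ))

/-- The Fourier-side measure on `ℤ³ × ℝ³` (counting measure times Lebesgue),
used to compute `L²(𝕋³ × ℝ³)` norms via Parseval. -/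
noncomputable def freqMeasure :
    Measure ((Fin 3 → ℤ) × EuclideanSpace ℝ (Fin 3)) :=
  (Measure.count : Measure (Fin 3 → ℤ)).prod
    (volume : Measure (EuclideanSpace ℝ (Fin 3)))

theorem gevrey_smoothing_toy_model (s : ℝ) (hs : 0 < s) (hs1 : s < 1)
    (G₀ : (Fin 3 → ℤ) → EuclideanSpace ℝ (Fin 3) → ℂ)
    (G : ℝ → (Fin 3 → ℤ) → EuclideanSpace ℝ (Fin 3) → ℂ)
    (hG : ∀ t m η, G t m η =
      Real.exp (-∫ ρ in (0:ℝ)..t, ‖η + ρ • intoE m‖ ^ (2 * s)) *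
        G₀ m (η + t • intoE m)) :
    ∀ t : ℝ, 0 < t → ∃ c : ℝ, 0 < c ∧
      (∫⁻ p, ENNReal.ofReal
            (Real.exp (2 * c * (‖intoE p.1‖ ^ 2 + ‖p.2‖ ^ 2) ^ s))
          * ((‖G t p.1 p.2‖₊ : ENNReal) ^ 2) ∂freqMeasure)
        ≤ ∫⁻ p, ((‖G₀ p.1 p.2‖₊ : ENNReal) ^ 2) ∂freqMeasure := by
  intro t ht
  obtain ⟨c, hc, hkey⟩ := key_lemma s t hs ht
  refine ⟨c, hc, ?_⟩
  haveI hsf : SFinite (Measure.count : Measure (Fin 3 → ℤ)) := by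
    unfold Measure.count; infer_instance
  set T : (Fin 3 → ℤ) × EuclideanSpace ℝ (Fin 3) → (Fin 3 → ℤ) × EuclideanSpace ℝ (Fin 3) :=
    fun p => (p.1, p.2 + t • intoE p.1) with hT_def
  set T' : (Fin 3 → ℤ) × EuclideanSpace ℝ (Fin 3) → (Fin 3 → ℤ) × EuclideanSpace ℝ (Fin 3) :=
    fun p => (p.1, p.2 - t • intoE p.1) with hT'_def
  have hmeas : Measurable (Function.uncurry
      (fun (m : Fin 3 → ℤ) (η : EuclideanSpace ℝ (Fin 3)) => η - t • intoE m)) :=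
    measurable_snd.sub ((measurable_of_countable (fun m => t • intoE m)).comp measurable_fst)
  have hT'meas : Measurable T' :=
    measurable_fst.prodMk
      (measurable_snd.sub ((measurable_of_countable (fun m => t • intoE m)).comp measurable_fst))
  have hT' : MeasurePreserving T' freqMeasure freqMeasure := by
    unfold freqMeasure
    exact MeasurePreserving.skew_product
      (g := fun (m : Fin 3 → ℤ) (η : EuclideanSpace ℝ (Fin 3)) => η - t • intoE m)
      (MeasurePreserving.id _) hmeas
      (Filter.Eventually.of_forall fun m =>
        (measurePreserving_sub_right volume (t • intoE m)).map_eq)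
  -- pointwise bound
  have hpoint : ∀ p : (Fin 3 → ℤ) × EuclideanSpace ℝ (Fin 3),
      ENNReal.ofReal (Real.exp (2 * c * (‖intoE p.1‖ ^ 2 + ‖p.2‖ ^ 2) ^ s))
          * ((‖G t p.1 p.2‖₊ : ENNReal) ^ 2)
        ≤ (‖G₀ (T p).1 (T p).2‖₊ : ENNReal) ^ 2 := by
    rintro ⟨m, η⟩
    simp only [hT_def]
    set I := ∫ ρ in (0:ℝ)..t, ‖η + ρ • intoE m‖ ^ (2 * s) with hI_def
    set A := (‖intoE m‖ ^ 2 + ‖η‖ ^ 2) ^ s with hA_def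
    set N := ‖G₀ m (η + t • intoE m)‖ with hN_def
    have hkey' : c * A ≤ I := hkey (intoE m) η
    have e1 : ∀ z : ℂ, ((‖z‖₊ : ENNReal)) ^ 2 = ENNReal.ofReal (‖z‖ ^ 2) := fun z => by
      rw [ENNReal.ofReal_pow (norm_nonneg z), ofReal_norm]; rfl
    rw [e1, e1, ← ENNReal.ofReal_mul (Real.exp_nonneg _)]
    apply ENNReal.ofReal_le_ofReal
    have hnorm : ‖G t m η‖ = Real.exp (-I) * N := by
      rw [hG t m η, norm_mul, Complex.norm_real, Real.norm_eq_abs,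
        abs_of_pos (Real.exp_pos _), hI_def, hN_def]
    rw [hnorm]
    have hsq : (Real.exp (-I) * N) ^ 2 = Real.exp (-(2*I)) * N ^ 2 := by
      rw [mul_pow, sq (Real.exp (-I)), ← Real.exp_add]
      ring_nf
    rw [hsq, ← mul_assoc, ← Real.exp_add]
    have hle : Real.exp (2 * c * A + -(2*I)) ≤ 1 := by
      rw [Real.exp_le_one_iff]
      linarith
    exact mul_le_of_le_one_left (sq_nonneg N) hle
  calc (∫⁻ p, ENNReal.ofReal (Real.exp (2 * c * (‖intoE p.1‖ ^ 2 + ‖p.2‖ ^ 2) ^ s))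
          * ((‖G t p.1 p.2‖₊ : ENNReal) ^ 2) ∂freqMeasure)
      ≤ ∫⁻ p, (‖G₀ (T p).1 (T p).2‖₊ : ENNReal) ^ 2 ∂freqMeasure :=
        lintegral_mono hpoint
    _ = ∫⁻ p, (‖G₀ (T p).1 (T p).2‖₊ : ENNReal) ^ 2 ∂(Measure.map T' freqMeasure) := by
        rw [hT'.map_eq]
    _ ≤ ∫⁻ p, (‖G₀ (T (T' p)).1 (T (T' p)).2‖₊ : ENNReal) ^ 2 ∂freqMeasure :=
        lintegral_map_le _ T'
    _ = ∫⁻ p, ((‖G₀ p.1 p.2‖₊ : ENNReal) ^ 2) ∂freqMeasure := by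
        simp [hT_def, hT'_def, sub_add_cancel]
end
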